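/- In the setting of a well-posed Grushin problem 𝓟 = [[P, R₋],[R₊, 0]] with inverse [[E, E₊],[E₋, E₋₊]] and E₋₊ an N×N matrix, one has for 1 ≤ k ≤ N: t_k(P) ≥ t_k(E₋₊) / (‖E‖ t_k(E₋₊) + ‖E₊‖ ‖E₋‖). -/
import Mathlib

open Module

lemma auxUnit {W : Type*} [NormedAddCommGroup W] [NormedSpace ℂ W]
    {L : Submodule ℂ W} {k : ℕ} (hk : 1 ≤ k) (hL : Module.finrank ℂ L = k) :
    ∃ x, x ∈ L ∧ ‖x‖ = 1 := by
  have hbot : L ≠ ⊥ := by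
    intro h
    rw [h, finrank_bot] at hL
    omega
  obtain ⟨x, hxL, hx0⟩ := Submodule.exists_mem_ne_zero_of_ne_bot hbot
  refine ⟨((‖x‖ : ℂ)⁻¹) • x, L.smul_mem _ hxL, ?_⟩
  rw [norm_smul, norm_inv, Complex.norm_real, norm_norm]
  exact inv_mul_cancel₀ (norm_ne_zero_iff.mpr hx0)

lemma auxBdd {W W' : Type*} [NormedAddCommGroup W] [NormedSpace ℂ W]
    [NormedAddCommGroup W'] [NormedSpace ℂ W'] (T : W →L[ℂ] W') (L : Submodule ℂ W) :
    BddAbove ((fun x => ‖T x‖) '' {x : W | x ∈ L ∧ ‖x‖ = 1}) := by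
  refine ⟨‖T‖, ?_⟩
  rintro r ⟨x, ⟨-, hx1⟩, rfl⟩
  calc ‖T x‖ ≤ ‖T‖ * ‖x‖ := T.le_opNorm x
  _ = ‖T‖ := by rw [hx1, mul_one]

lemma auxSupNonneg {W W' : Type*} [NormedAddCommGroup W] [NormedSpace ℂ W]
    [NormedAddCommGroup W'] [NormedSpace ℂ W'] (T : W →L[ℂ] W') {L : Submodule ℂ W}
    {k : ℕ} (hk : 1 ≤ k) (hL : Module.finrank ℂ L = k) :
    0 ≤ sSup ((fun x => ‖T x‖) '' {x : W | x ∈ L ∧ ‖x‖ = 1}) := by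
  obtain ⟨x, hxL, hx1⟩ := auxUnit hk hL
  exact le_trans (norm_nonneg (T x)) (le_csSup (auxBdd T L) ⟨x, ⟨hxL, hx1⟩, rfl⟩)

lemma auxScaled {W W' : Type*} [NormedAddCommGroup W] [NormedSpace ℂ W]
    [NormedAddCommGroup W'] [NormedSpace ℂ W'] (T : W →L[ℂ] W') (L : Submodule ℂ W)
    {s : ℝ} (hb : ∀ x, x ∈ L → ‖x‖ = 1 → ‖T x‖ ≤ s) :
    ∀ x, x ∈ L → ‖T x‖ ≤ s * ‖x‖ := by
  intro x hxL
  rcases eq_or_ne x 0 with rfl | hx0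
  · simp
  · have hxn : ‖x‖ ≠ 0 := norm_ne_zero_iff.mpr hx0
    have h1 : ‖((‖x‖ : ℂ)⁻¹) • x‖ = 1 := by
      rw [norm_smul, norm_inv, Complex.norm_real, norm_norm]
      exact inv_mul_cancel₀ hxn
    have := hb _ (L.smul_mem ((‖x‖ : ℂ)⁻¹) hxL) h1
    rw [map_smul, norm_smul, norm_inv, Complex.norm_real, norm_norm] at this
    have hpos : (0:ℝ) < ‖x‖ := lt_of_le_of_ne (norm_nonneg x) (Ne.symm hxn)
    calc ‖T x‖ = ‖x‖ * (‖x‖⁻¹ * ‖T x‖) := by field_simp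
    _ ≤ ‖x‖ * s := by exact mul_le_mul_of_nonneg_left this (le_of_lt hpos)
    _ = s * ‖x‖ := mul_comm _ _

lemma auxExistsSub (N k : ℕ) (hk : k ≤ N) :
    ∃ L : Submodule ℂ (EuclideanSpace ℂ (Fin N)), Module.finrank ℂ L = k := by
  have b := (EuclideanSpace.basisFun (Fin N) ℂ).toBasis
  have hli : LinearIndependent ℂ (fun i : Fin k => b (Fin.castLE hk i)) :=
    b.linearIndependent.comp _ (Fin.castLE_injective hk)
  refine ⟨Submodule.span ℂ (Set.range fun i : Fin k => b (Fin.castLE hk i)), ?_⟩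
  rw [finrank_span_eq_card hli, Fintype.card_fin]

lemma auxFinrankMap {W W' : Type*} [NormedAddCommGroup W] [NormedSpace ℂ W]
    [NormedAddCommGroup W'] [NormedSpace ℂ W'] (T : W →L[ℂ] W') (L : Submodule ℂ W)
    (hinj : ∀ x ∈ L, T x = 0 → x = 0) :
    Module.finrank ℂ (L.map (T : W →ₗ[ℂ] W')) = Module.finrank ℂ L := by
  set g : L →ₗ[ℂ] W' := (T : W →ₗ[ℂ] W').comp L.subtype with hg
  have hginj : Function.Injective g := by
    intro a b hab
    have hz : T ((a : W) - (b : W)) = 0 := by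
      simp only [hg, LinearMap.comp_apply, Submodule.subtype_apply,
        ContinuousLinearMap.coe_coe] at hab
      rw [map_sub, hab, sub_self]
    have := hinj _ (L.sub_mem a.2 b.2) hz
    exact Subtype.ext (by rwa [sub_eq_zero] at this)
  have hrange : LinearMap.range g = L.map (T : W →ₗ[ℂ] W') := by
    rw [hg, LinearMap.range_comp, Submodule.range_subtype]
  rw [← hrange, LinearMap.finrank_range_of_inj hginj]


/-- The `k`-th smallest singular value of a bounded operator `P` on a Hilbert space,
via the min-max characterization `t_k(P) = inf_{dim L = k} sup_{x ∈ L, ‖x‖=1} ‖P x‖`. -/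
noncomputable def tVal {H : Type*} [NormedAddCommGroup H] [InnerProductSpace ℂ H]
    (P : H →L[ℂ] H) (k : ℕ) : ℝ :=
  sInf {r : ℝ | ∃ L : Submodule ℂ H, Module.finrank ℂ L = k ∧
    r = sSup ((fun x => ‖P x‖) '' {x : H | x ∈ L ∧ ‖x‖ = 1})}

set_option maxHeartbeats 1000000 in
/-- for a well-posed Grushin problem `𝓟 = [[P, R₋],[R₊, 0]]` with
inverse `[[E, E₊],[E₋, E₋₊]]` and `E₋₊` of size `N×N`, one has
`t_k(P) ≥ t_k(E₋₊) / (‖E‖ t_k(E₋₊) + ‖E₊‖ ‖E₋‖)` for `1 ≤ k ≤ N`. -/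
theorem stmt13 {H : Type*} [NormedAddCommGroup H] [InnerProductSpace ℂ H] [CompleteSpace H]
    (N : ℕ) (P : H →L[ℂ] H)
    (Rp : H →L[ℂ] EuclideanSpace ℂ (Fin N)) (Rm : EuclideanSpace ℂ (Fin N) →L[ℂ] H)
    (E : H →L[ℂ] H) (Ep : EuclideanSpace ℂ (Fin N) →L[ℂ] H)
    (Em : H →L[ℂ] EuclideanSpace ℂ (Fin N))
    (Emp : EuclideanSpace ℂ (Fin N) →L[ℂ] EuclideanSpace ℂ (Fin N))
    (h1 : ∀ u um, E (P u + Rm um) + Ep (Rp u) = u)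
    (h2 : ∀ u um, Em (P u + Rm um) + Emp (Rp u) = um)
    (h3 : ∀ v vp, P (E v + Ep vp) + Rm (Em v + Emp vp) = v)
    (h4 : ∀ v vp, Rp (E v + Ep vp) = vp) :
    ∀ k : ℕ, 1 ≤ k → k ≤ N →
      tVal Emp k / (‖E‖ * tVal Emp k + ‖Ep‖ * ‖Em‖) ≤ tVal P k := by
  intro k hk1 hkN
  -- basic identities
  have hEP : ∀ u, E (P u) + Ep (Rp u) = u := fun u => by simpa using h1 u 0
  have hEmP : ∀ u, Em (P u) + Emp (Rp u) = 0 := fun u => by simpa using h2 u 0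
  have hRpEp : ∀ vp, Rp (Ep vp) = vp := fun vp => by simpa using h4 0 vp
  have hEpInj : Function.Injective Ep := fun a b hab => by
    rw [← hRpEp a, ← hRpEp b]; simp [hab]
  set c : ℝ := ‖Ep‖ * ‖Em‖ with hc
  have hc0 : 0 ≤ c := mul_nonneg (norm_nonneg _) (norm_nonneg _)
  set t : ℝ := tVal Emp k with htdef
  set SE : Set ℝ := {r : ℝ | ∃ L : Submodule ℂ (EuclideanSpace ℂ (Fin N)),
      Module.finrank ℂ L = k ∧
      r = sSup ((fun x => ‖Emp x‖) '' {x | x ∈ L ∧ ‖x‖ = 1})} with hSE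
  set SP : Set ℝ := {r : ℝ | ∃ L : Submodule ℂ H, Module.finrank ℂ L = k ∧
      r = sSup ((fun x => ‖P x‖) '' {x : H | x ∈ L ∧ ‖x‖ = 1})} with hSP
  have hSEbdd : ∀ r ∈ SE, 0 ≤ r := by
    rintro r ⟨L, hLk, rfl⟩
    exact auxSupNonneg Emp hk1 hLk
  have hSPbdd : ∀ r ∈ SP, 0 ≤ r := by
    rintro r ⟨L, hLk, rfl⟩
    exact auxSupNonneg P hk1 hLk
  have ht0 : 0 ≤ t := Real.sInf_nonneg hSEbdd
  -- SP is nonempty: take the image under the injective map Ep of a k-dim submodule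
  obtain ⟨L0, hL0⟩ := auxExistsSub N k hkN
  have hSPne : SP.Nonempty := by
    refine ⟨_, L0.map (Ep : EuclideanSpace ℂ (Fin N) →ₗ[ℂ] H), ?_, rfl⟩
    rw [auxFinrankMap Ep L0 (fun x _ hx => hEpInj (by simpa using hx)), hL0]
  have hEnn : (0:ℝ) ≤ ‖E‖ := norm_nonneg _
  rw [show tVal P k = sInf SP from rfl]
  apply le_csInf hSPne
  rintro s ⟨L, hLk, rfl⟩
  set s := sSup ((fun x => ‖P x‖) '' {x : H | x ∈ L ∧ ‖x‖ = 1}) with hsdef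
  have hs0 : 0 ≤ s := auxSupNonneg P hk1 hLk
  have hsb : ∀ x, x ∈ L → ‖P x‖ ≤ s * ‖x‖ := by
    refine auxScaled P L ?_
    intro x hxL hx1
    exact le_csSup (auxBdd P L) ⟨x, ⟨hxL, hx1⟩, rfl⟩
  -- final arithmetic step, given t ≤ s * (‖E‖ * t + c)
  have key : t ≤ s * (‖E‖ * t + c) → t / (‖E‖ * t + c) ≤ s := by
    intro hts
    rcases eq_or_lt_of_le (add_nonneg (mul_nonneg hEnn ht0) hc0) with hd | hd
    · rw [← hd, div_zero]; exact hs0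
    · rw [div_le_iff₀ hd]; linarith [hts]
  apply key
  by_cases hcase : ‖E‖ * s < 1
  · -- main case: Rp is injective on L
    have hinj : ∀ x ∈ L, Rp x = 0 → x = 0 := by
      intro x hxL hRx
      by_contra hx0
      have hx : x = E (P x) := by
        have := hEP x
        rw [hRx] at this
        simpa using this.symm
      have h1' : ‖x‖ ≤ ‖E‖ * (s * ‖x‖) := by
        calc ‖x‖ = ‖E (P x)‖ := by rw [← hx]
        _ ≤ ‖E‖ * ‖P x‖ := E.le_opNorm _
        _ ≤ ‖E‖ * (s * ‖x‖) := by nlinarith [hsb x hxL, norm_nonneg (P x)]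
      have hxpos : 0 < ‖x‖ := norm_pos_iff.mpr hx0
      nlinarith
    set L' : Submodule ℂ (EuclideanSpace ℂ (Fin N)) :=
      L.map (Rp : H →ₗ[ℂ] EuclideanSpace ℂ (Fin N)) with hL'
    have hL'k : Module.finrank ℂ L' = k := by
      rw [hL', auxFinrankMap Rp L hinj, hLk]
    have hmem : sSup ((fun y => ‖Emp y‖) '' {y | y ∈ L' ∧ ‖y‖ = 1}) ∈ SE :=
      ⟨L', hL'k, rfl⟩
    have htSE : t = sInf SE := rfl
    have htle : t ≤ sSup ((fun y => ‖Emp y‖) '' {y | y ∈ L' ∧ ‖y‖ = 1}) := by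
      rw [htSE]
      exact csInf_le (⟨0, hSEbdd⟩ : BddBelow SE) hmem
    have hsup : sSup ((fun y => ‖Emp y‖) '' {y | y ∈ L' ∧ ‖y‖ = 1})
        ≤ ‖Em‖ * ‖Ep‖ * s / (1 - ‖E‖ * s) := by
      obtain ⟨y0, hy0L, hy01⟩ := auxUnit hk1 hL'k
      have hne : ((fun y => ‖Emp y‖) '' {y | y ∈ L' ∧ ‖y‖ = 1}).Nonempty :=
        ⟨‖Emp y0‖, ⟨y0, ⟨hy0L, hy01⟩, rfl⟩⟩
      apply csSup_le hne
      rintro r ⟨y, ⟨hyL', hy1⟩, rfl⟩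
      obtain ⟨x, hxL, hRx⟩ := Submodule.mem_map.mp hyL'
      have hEmpEq : Emp y = -(Em (P x)) := by
        have := hEmP x
        rw [show ((Rp : H →ₗ[ℂ] EuclideanSpace ℂ (Fin N)) x) = Rp x from rfl] at hRx
        rw [hRx] at this
        linear_combination (norm := abel) this
      have hb1 : ‖Emp y‖ ≤ ‖Em‖ * (s * ‖x‖) := by
        rw [hEmpEq, norm_neg]
        exact le_trans (Em.le_opNorm (P x)) (by
          have := hsb x hxL
          nlinarith [norm_nonneg (P x), norm_nonneg Em])
      have hb2 : (1 - ‖E‖ * s) * ‖x‖ ≤ ‖Ep‖ := by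
        have hxeq : x = E (P x) + Ep y := by
          have := hEP x
          rw [show ((Rp : H →ₗ[ℂ] EuclideanSpace ℂ (Fin N)) x) = Rp x from rfl] at hRx
          rw [hRx] at this
          exact this.symm
        have hle : ‖x‖ ≤ ‖E‖ * (s * ‖x‖) + ‖Ep‖ := by
          calc ‖x‖ = ‖E (P x) + Ep y‖ := by rw [← hxeq]
          _ ≤ ‖E (P x)‖ + ‖Ep y‖ := norm_add_le _ _
          _ ≤ ‖E‖ * (s * ‖x‖) + ‖Ep‖ * ‖y‖ := by
              gcongr
              · exact le_trans (E.le_opNorm (P x)) (by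
                  have := hsb x hxL
                  nlinarith [norm_nonneg (P x), norm_nonneg E])
              · exact Ep.le_opNorm y
          _ = ‖E‖ * (s * ‖x‖) + ‖Ep‖ := by rw [hy1, mul_one]
        nlinarith
      rw [le_div_iff₀ (by linarith)]
      nlinarith [norm_nonneg x, norm_nonneg (Emp y), norm_nonneg Em,
        mul_nonneg (norm_nonneg Em) hs0]
    have := le_trans htle hsup
    rw [le_div_iff₀ (by linarith)] at this
    nlinarith
  · -- easy case: ‖E‖ * s ≥ 1
    push_neg at hcase
    nlinarith [mul_nonneg hs0 hc0]
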